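/- Let V be a finite-dimensional real vector space with a nondegenerate symmetric bilinear form, and let D^s, D^a be endomorphisms with D^s symmetric and D^a antisymmetric, satisfying [D^s, D^a] = h·D^s − 2(D^s)² for some real constant h. If D^s is diagonalizable over ℂ with an orthonormal basis of eigenvectors in the complexification, then [D^s, D^a] = 0 and hence h·D^s = 2(D^s)². -/

import Mathlib

open TensorProduct in
/-- If `D^s` is symmetric, `D^a` antisymmetric, `[D^s,D^a] = hD^s − 2(D^s)²`, and the
complexification of `D^s` admits an orthonormal basis of eigenvectors, then
`[D^s,D^a] = 0` and `hD^s = 2(D^s)²`. -/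
theorem diagonalizable_symmetric_part_commutes
    {V : Type*} [AddCommGroup V] [Module ℝ V] [FiniteDimensional ℝ V]
    (g : V →ₗ[ℝ] V →ₗ[ℝ] ℝ)
    (hsymm : ∀ x y, g x y = g y x)
    (hnd : ∀ x, (∀ y, g x y = 0) → x = 0)
    (Ds Da : V →ₗ[ℝ] V)
    (hDs : ∀ x y, g (Ds x) y = g x (Ds y))
    (hDa : ∀ x y, g (Da x) y = - g x (Da y))
    (h : ℝ)
    (hrel : Ds ∘ₗ Da - Da ∘ₗ Ds = h • Ds - (2 : ℝ) • (Ds ∘ₗ Ds))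
    (gC : (ℂ ⊗[ℝ] V) →ₗ[ℂ] (ℂ ⊗[ℝ] V) →ₗ[ℂ] ℂ)
    (hgC : ∀ x y : V, gC (1 ⊗ₜ[ℝ] x) (1 ⊗ₜ[ℝ] y) = (g x y : ℂ))
    (ι : Type*) [Fintype ι] [DecidableEq ι] (bas : Module.Basis ι ℂ (ℂ ⊗[ℝ] V)) (μ : ι → ℂ)
    (heig : ∀ i, (Ds.baseChange ℂ) (bas i) = μ i • bas i)
    (horth : ∀ i j, gC (bas i) (bas j) = if i = j then 1 else 0) :
    Ds ∘ₗ Da = Da ∘ₗ Ds ∧ h • Ds = (2 : ℝ) • (Ds ∘ₗ Ds) := by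
  -- extend the adjointness relations to the complexification
  have adj : ∀ (T : V →ₗ[ℝ] V) (ε : ℝ), (∀ x y, g (T x) y = ε * g x (T y)) →
      ∀ u v : ℂ ⊗[ℝ] V, gC ((T.baseChange ℂ) u) v = (ε : ℂ) * gC u ((T.baseChange ℂ) v) := by
    intro T ε hT u v
    induction u using TensorProduct.induction_on with
    | zero => simp
    | add a b ha hb =>
        simp only [map_add, LinearMap.add_apply, ha, hb]; ring
    | tmul a x =>
        induction v using TensorProduct.induction_on with
        | zero => simp
        | add a b ha hb => simp only [map_add, ha, hb]; ring
        | tmul b y =>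
            have h1 : (a ⊗ₜ[ℝ] x : ℂ ⊗[ℝ] V) = a • (1 ⊗ₜ[ℝ] x) := by
              rw [smul_tmul']; simp
            have h2 : (b ⊗ₜ[ℝ] y : ℂ ⊗[ℝ] V) = b • (1 ⊗ₜ[ℝ] y) := by
              rw [smul_tmul']; simp
            rw [h1, h2]
            simp only [map_smul, LinearMap.smul_apply, smul_eq_mul]
            rw [LinearMap.baseChange_tmul, LinearMap.baseChange_tmul]
            have h3 : (1 ⊗ₜ[ℝ] (T x) : ℂ ⊗[ℝ] V) = (1 : ℂ) ⊗ₜ[ℝ] (T x) := rfl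
            rw [hgC, hgC, hT]
            push_cast
            ring
  have adjDs := adj Ds 1 (by simpa using hDs)
  have adjDa := adj Da (-1) (by intro x y; rw [hDa]; ring)
  simp only [Complex.ofReal_one, one_mul] at adjDs
  -- the diagonal entries of the commutator vanish
  have key : ∀ i, gC ((Ds.baseChange ℂ) ((Da.baseChange ℂ) (bas i))
      - (Da.baseChange ℂ) ((Ds.baseChange ℂ) (bas i))) (bas i) = 0 := by
    intro i
    rw [map_sub, LinearMap.sub_apply, adjDs, heig i]
    simp only [map_smul, LinearMap.smul_apply, smul_eq_mul, heig i]
    ring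
  -- base change of the relation
  have hrelC : ∀ i, ((Ds ∘ₗ Da - Da ∘ₗ Ds).baseChange ℂ) (bas i)
      = (h * μ i - 2 * (μ i)^2) • bas i := by
    intro i
    rw [hrel, LinearMap.baseChange_sub, LinearMap.baseChange_smul, LinearMap.baseChange_smul,
      LinearMap.baseChange_comp]
    simp only [LinearMap.sub_apply, LinearMap.smul_apply, LinearMap.comp_apply, heig i, map_smul,
      heig i]
    have cast_smul : ∀ (r : ℝ) (v : ℂ ⊗[ℝ] V), (r : ℂ) • v = r • v := fun r v => by
      rw [← algebraMap_smul ℂ r v]; norm_num [Algebra.smul_def]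
    rw [← cast_smul h, ← cast_smul 2, smul_smul, smul_smul, smul_smul, sub_smul]
    push_cast
    ring_nf
  -- the eigenvalue relation
  have heval : ∀ i, h * μ i - 2 * (μ i)^2 = 0 := by
    intro i
    have := key i
    rw [show (Ds.baseChange ℂ) ((Da.baseChange ℂ) (bas i))
        - (Da.baseChange ℂ) ((Ds.baseChange ℂ) (bas i))
        = ((Ds ∘ₗ Da - Da ∘ₗ Ds).baseChange ℂ) (bas i) by
      rw [LinearMap.baseChange_sub, LinearMap.baseChange_comp, LinearMap.baseChange_comp]
      simp, hrelC i, map_smul, LinearMap.smul_apply, horth i i] at this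
    simpa using this
  -- hence the base change of h•Ds - 2•Ds² vanishes
  have hzeroC : ((h • Ds - (2:ℝ) • (Ds ∘ₗ Ds)).baseChange ℂ) = 0 := by
    apply Module.Basis.ext bas
    intro i
    have : ((Ds ∘ₗ Da - Da ∘ₗ Ds).baseChange ℂ) (bas i) = 0 := by
      rw [hrelC i, heval i, zero_smul]
    rw [← hrel, this, LinearMap.zero_apply]
  -- descend to V using nondegeneracy
  have hzero : (h • Ds - (2:ℝ) • (Ds ∘ₗ Ds)) = 0 := by
    ext x
    apply hnd
    intro y
    have h1 : (1 : ℂ) ⊗ₜ[ℝ] ((h • Ds - (2:ℝ) • (Ds ∘ₗ Ds)) x) = 0 := by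
      rw [← LinearMap.baseChange_tmul, hzeroC, LinearMap.zero_apply]
    have h2 : (g ((h • Ds - (2:ℝ) • (Ds ∘ₗ Ds)) x) y : ℂ) = 0 := by
      rw [← hgC, h1, map_zero, LinearMap.zero_apply]
    exact_mod_cast h2
  rw [sub_eq_zero] at hzero
  refine ⟨?_, hzero⟩
  rw [← sub_eq_zero, hrel, hzero, sub_self]
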